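/- Let A, B, C ∈ GL(n, ℤ) (viewed over ℂ) with A commuting with both B and C, and suppose A has an eigenvalue α with |α| ≠ 1. If A^r B C = C B for some r ∈ ℤ, then r = 0. -/

import Mathlib

open Module

private lemma unit_inv_apply_apply {V : Type*} [AddCommGroup V] [Module ℂ V]
    (g : (Module.End ℂ V)ˣ) (x : V) :
    ((g⁻¹ : (Module.End ℂ V)ˣ) : Module.End ℂ V) ((g : Module.End ℂ V) x) = x := by
  have h1 : ((g⁻¹ * g : (Module.End ℂ V)ˣ) : Module.End ℂ V) x = x := by
    rw [inv_mul_cancel, Units.val_one, Module.End.one_apply]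
  calc ((g⁻¹ : (Module.End ℂ V)ˣ) : Module.End ℂ V) ((g : Module.End ℂ V) x)
      = ((g⁻¹ * g : (Module.End ℂ V)ˣ) : Module.End ℂ V) x := by
        rw [Units.val_mul, Module.End.mul_apply]
    _ = x := h1

private lemma unit_apply_ne_zero {V : Type*} [AddCommGroup V] [Module ℂ V]
    (g : (Module.End ℂ V)ˣ) {x : V} (hx : x ≠ 0) :
    (g : Module.End ℂ V) x ≠ 0 := by
  intro h0
  apply hx
  have := unit_inv_apply_apply g x
  rw [h0, map_zero] at this
  exact this.symm

private lemma unit_zpow_apply_eig {V : Type*} [AddCommGroup V] [Module ℂ V]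
    (g : (Module.End ℂ V)ˣ) (μ : ℂ) (hμ : μ ≠ 0) (y : V)
    (hy : (g : Module.End ℂ V) y = μ • y) (m : ℤ) :
    ((g ^ m : (Module.End ℂ V)ˣ) : Module.End ℂ V) y = μ ^ m • y := by
  have hnat : ∀ k : ℕ, ((g ^ k : (Module.End ℂ V)ˣ) : Module.End ℂ V) y = μ ^ k • y := by
    intro k
    induction k with
    | zero => simp
    | succ k ih =>
      have h1 : (g ^ (k + 1) : (Module.End ℂ V)ˣ) = g * g ^ k := by
        rw [pow_succ']
      rw [h1, Units.val_mul, Module.End.mul_apply, ih, map_smul, hy, smul_smul, pow_succ']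
      congr 1
      ring
  have hinv : ∀ (k : ℕ), (((g ^ (k + 1))⁻¹ : (Module.End ℂ V)ˣ) : Module.End ℂ V) y
      = (μ ^ (k + 1))⁻¹ • y := by
    intro k
    have h1 : ((g ^ (k + 1) : (Module.End ℂ V)ˣ) : Module.End ℂ V) y = μ ^ (k + 1) • y :=
      hnat (k + 1)
    have h2 := congrArg (fun z => (((g ^ (k + 1))⁻¹ : (Module.End ℂ V)ˣ) : Module.End ℂ V) z) h1
    simp only [map_smul, unit_inv_apply_apply] at h2
    have hμk : (μ : ℂ) ^ (k + 1) ≠ 0 := pow_ne_zero _ hμ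
    have h3 := congrArg (fun z => ((μ : ℂ) ^ (k + 1))⁻¹ • z) h2
    simp only [smul_smul, inv_mul_cancel₀ hμk, one_smul] at h3
    exact h3.symm
  cases m with
  | ofNat k =>
    simpa [zpow_natCast] using hnat k
  | negSucc k =>
    rw [zpow_negSucc, zpow_negSucc]
    exact hinv k

private lemma key_aux {V : Type*} [AddCommGroup V] [Module ℂ V] [FiniteDimensional ℂ V]
    (a b c : (Module.End ℂ V)ˣ)
    (hab : a * b = b * a) (hac : a * c = c * a)
    (α : ℂ) (v : V) (hv : v ≠ 0) (hva : (a : Module.End ℂ V) v = α • v)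
    (habs : ‖α‖ ≠ 1)
    (r : ℤ) (h : a ^ r * b * c = c * b) : r = 0 := by
  by_contra hr
  have hα0 : α ≠ 0 := by
    intro h0
    apply unit_apply_ne_zero a hv
    rw [hva, h0, zero_smul]
  -- the eigenspace of a for α
  set W : Submodule ℂ V := Module.End.eigenspace (a : Module.End ℂ V) α with hW
  have hvW : v ∈ W := Module.End.mem_eigenspace_iff.2 hva
  -- b and c preserve W
  have comm_apply : ∀ (p q : (Module.End ℂ V)ˣ), p * q = q * p →
      ∀ x : V, (p : Module.End ℂ V) ((q : Module.End ℂ V) x)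
        = (q : Module.End ℂ V) ((p : Module.End ℂ V) x) := by
    intro p q hpq x
    have := congrArg (fun f : Module.End ℂ V => f x) (congrArg Units.val hpq)
    simpa using this
  have hbW : ∀ x, x ∈ W → (b : Module.End ℂ V) x ∈ W := by
    intro x hx
    rw [hW, Module.End.mem_eigenspace_iff] at hx ⊢
    rw [comm_apply a b hab, hx, map_smul]
  have hcW : ∀ x, x ∈ W → (c : Module.End ℂ V) x ∈ W := by
    intro x hx
    rw [hW, Module.End.mem_eigenspace_iff] at hx ⊢
    rw [comm_apply a c hac, hx, map_smul]
  -- b restricted to W has an eigenvector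
  have : Nontrivial W := by
    refine nontrivial_of_ne ⟨v, hvW⟩ 0 ?_
    intro hcontra
    exact hv (by simpa using congrArg Subtype.val hcontra)
  obtain ⟨β, hβ⟩ := Module.End.exists_eigenvalue ((b : Module.End ℂ V).restrict hbW)
  obtain ⟨w', hw'⟩ := hβ.exists_hasEigenvector
  have hw'0 : (w' : V) ≠ 0 := fun h0 => hw'.right (Subtype.ext h0)
  have hw'W : (w' : V) ∈ W := w'.2
  have hbw : (b : Module.End ℂ V) (w' : V) = β • (w' : V) := by
    have := hw'.apply_eq_smul
    have := congrArg Subtype.val this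
    simpa [LinearMap.restrict_apply] using this
  have hβ0 : β ≠ 0 := by
    intro h0
    apply unit_apply_ne_zero b hw'0
    rw [hbw, h0, zero_smul]
  -- key iteration
  set q : ℂ := α ^ (-r) with hq
  have hq0 : q ≠ 0 := zpow_ne_zero _ hα0
  have step : ∀ (x : V) (μ : ℂ), x ∈ W → x ≠ 0 → (b : Module.End ℂ V) x = μ • x →
      ((c : Module.End ℂ V) x ∈ W ∧ (c : Module.End ℂ V) x ≠ 0 ∧
        (b : Module.End ℂ V) ((c : Module.End ℂ V) x) = (q * μ) • ((c : Module.End ℂ V) x)) := by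
    intro x μ hxW hx0 hbx
    have hcxW : (c : Module.End ℂ V) x ∈ W := hcW x hxW
    refine ⟨hcxW, unit_apply_ne_zero c hx0, ?_⟩
    -- apply h to x
    have happ := congrArg (fun f : Module.End ℂ V => f x) (congrArg Units.val h)
    simp only [Units.val_mul, Module.End.mul_apply] at happ
    -- happ : (a^r) (b (c x)) = c (b x)
    have hrhs : (c : Module.End ℂ V) ((b : Module.End ℂ V) x)
        = μ • (c : Module.End ℂ V) x := by rw [hbx, map_smul]
    have hbcxW : (b : Module.End ℂ V) ((c : Module.End ℂ V) x) ∈ W := hbW _ hcxW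
    have hbcx_eig : (a : Module.End ℂ V) ((b : Module.End ℂ V) ((c : Module.End ℂ V) x))
        = α • ((b : Module.End ℂ V) ((c : Module.End ℂ V) x)) :=
      Module.End.mem_eigenspace_iff.1 hbcxW
    have hzpow := unit_zpow_apply_eig a α hα0 _ hbcx_eig r
    rw [hzpow, hrhs] at happ
    -- happ : α ^ r • (b (c x)) = μ • (c x)
    have := congrArg (fun z => (α ^ r)⁻¹ • z) happ
    simp only [smul_smul] at this
    rw [inv_mul_cancel₀ (zpow_ne_zero _ hα0), one_smul] at this
    rw [this, hq, zpow_neg]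
  -- iterate
  have iter : ∀ i : ℕ, (((c : Module.End ℂ V) ^ i) (w' : V) ∈ W ∧
      ((c : Module.End ℂ V) ^ i) (w' : V) ≠ 0 ∧
      (b : Module.End ℂ V) (((c : Module.End ℂ V) ^ i) (w' : V))
        = (β * q ^ i) • ((c : Module.End ℂ V) ^ i) (w' : V)) := by
    intro i
    induction i with
    | zero =>
      refine ⟨?_, ?_, ?_⟩
      · simpa using hw'W
      · simpa using hw'0
      · simpa using hbw
    | succ i ih =>
      obtain ⟨h1, h2, h3⟩ := ih
      obtain ⟨k1, k2, k3⟩ := step _ _ h1 h2 h3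
      refine ⟨?_, ?_, ?_⟩
      · rw [pow_succ', Module.End.mul_apply]; exact k1
      · rw [pow_succ', Module.End.mul_apply]; exact k2
      · rw [pow_succ', Module.End.mul_apply, k3]
        congr 1
        ring
  -- eigenvalues are pairwise distinct
  have habsq : ‖q‖ ≠ 1 := by
    rw [hq, norm_zpow]
    intro hcontra
    have h1 : ‖α‖ ≠ 1 := habs
    have := (zpow_eq_one_iff_right₀ (norm_nonneg α) h1).1 hcontra
    omega
  have hqabs_pos : 0 < ‖q‖ := norm_pos_iff.mpr hq0
  have hinj : Function.Injective (fun i : ℕ => β * q ^ i) := by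
    intro i j hij
    simp only at hij
    have habs_eq : ‖β * q ^ i‖ = ‖β * q ^ j‖ := by rw [hij]
    simp only [norm_mul, norm_pow] at habs_eq
    have hβabs : ‖β‖ ≠ 0 := norm_ne_zero_iff.mpr hβ0
    have : ‖q‖ ^ i = ‖q‖ ^ j := mul_left_cancel₀ hβabs habs_eq
    exact pow_right_injective₀ hqabs_pos habsq this
  -- contradiction with finite dimension
  set d := Module.finrank ℂ V with hd
  have heig : ∀ i : Fin (d + 1),
      (b : Module.End ℂ V).HasEigenvector (β * q ^ (i : ℕ))
        (((c : Module.End ℂ V) ^ (i : ℕ)) (w' : V)) := by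
    intro i
    obtain ⟨h1, h2, h3⟩ := iter (i : ℕ)
    exact ⟨Module.End.mem_eigenspace_iff.2 h3, h2⟩
  have hinj' : Function.Injective (fun i : Fin (d + 1) => β * q ^ (i : ℕ)) := by
    intro i j hij
    exact Fin.ext (hinj hij)
  have li := Module.End.eigenvectors_linearIndependent' (b : Module.End ℂ V)
    _ hinj' _ heig
  have hcard := li.fintype_card_le_finrank
  simp only [Fintype.card_fin] at hcard
  omega

/-- If `A, B, C ∈ GL(n, ℤ)` with `A` commuting with `B` and `C`, `A` has a complex
eigenvalue of absolute value `≠ 1`, and `A^r B C = C B` for some integer `r`, then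
`r = 0`. -/
theorem commutativity_transitive_aux (n : ℕ)
    (A B C : (Matrix (Fin n) (Fin n) ℤ)ˣ)
    (hAB : A * B = B * A) (hAC : A * C = C * A)
    (α : ℂ)
    (hα : ∃ v : Fin n → ℂ, v ≠ 0 ∧
      ((A : Matrix (Fin n) (Fin n) ℤ).map (fun z : ℤ => (z : ℂ))).mulVec v = α • v)
    (habs : ‖α‖ ≠ 1)
    (r : ℤ) (h : A ^ r * B * C = C * B) :
    r = 0 := by
  obtain ⟨v, hv, hva⟩ := hα
  -- the ring hom from integer matrices to endomorphisms of ℂ^n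
  set ψ : Matrix (Fin n) (Fin n) ℤ →+* Module.End ℂ (Fin n → ℂ) :=
    ((Matrix.toLinAlgEquiv' : Matrix (Fin n) (Fin n) ℂ ≃ₐ[ℂ] Module.End ℂ (Fin n → ℂ)).toRingEquiv.toRingHom.comp
      ((Int.castRingHom ℂ).mapMatrix)) with hψ
  set Ψ : (Matrix (Fin n) (Fin n) ℤ)ˣ →* (Module.End ℂ (Fin n → ℂ))ˣ :=
    Units.map ψ.toMonoidHom with hΨ
  have hcoe : ∀ M : (Matrix (Fin n) (Fin n) ℤ)ˣ, ∀ x : Fin n → ℂ,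
      ((Ψ M : (Module.End ℂ (Fin n → ℂ))ˣ) : Module.End ℂ (Fin n → ℂ)) x
        = ((M : Matrix (Fin n) (Fin n) ℤ).map (fun z : ℤ => (z : ℂ))).mulVec x := by
    intro M x
    simp [hΨ, hψ, Matrix.toLinAlgEquiv'_apply, RingHom.mapMatrix_apply]
  have hva' : ((Ψ A : (Module.End ℂ (Fin n → ℂ))ˣ) : Module.End ℂ (Fin n → ℂ)) v = α • v := by
    rw [hcoe]; exact hva
  refine key_aux (Ψ A) (Ψ B) (Ψ C) ?_ ?_ α v hv hva' habs r ?_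
  · rw [← map_mul, ← map_mul, hAB]
  · rw [← map_mul, ← map_mul, hAC]
  · rw [← map_zpow, ← map_mul, ← map_mul, ← map_mul, h]
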